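/- Let $p \in (0,1)$ and $q = p' = p/(p-1) < 0$, and let $f : \mathbb{R}^n \to [0,\infty)$ be measurable with $0 < \int_{\mathbb{R}^n} f\, dz < +\infty$. Then $\int_{\mathbb{R}^n} \big( \int_{\mathbb{R}^n} e^{\frac1p\langle x, z\rangle} f(z)^{1/p}\, dz \big)^q dx \ \ge\ \big( \int_{\mathbb{R}^n} f\, dz \big)^q (1-p)^n \int_{\mathbb{R}^n} f^\circ(x)\, dx$. -/

import Mathlib

open MeasureTheory Real Filter
open scoped ENNReal

noncomputable section

/-- The polar (dual) function `f°(x) = inf_y exp(-⟨x,y⟩)/f(y)`, valued in `[0,∞]`. -/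
def polarFn {n : ℕ} (f : EuclideanSpace ℝ (Fin n) → ℝ) (x : EuclideanSpace ℝ (Fin n)) : ℝ≥0∞ :=
  ⨅ y : EuclideanSpace ℝ (Fin n),
    ENNReal.ofReal (Real.exp (-(inner ℝ x y : ℝ))) / ENNReal.ofReal (f y)

/-- Change of variables for a linear scaling on Euclidean space. -/
private lemma chgvar (n : ℕ) (r : ℝ) (hr : 0 < r) (F : EuclideanSpace ℝ (Fin n) → ℝ≥0∞) :
    ∫⁻ x, F x = ENNReal.ofReal (r ^ n) * ∫⁻ u, F (r • u) := by
  have hr0 : r ≠ 0 := hr.ne'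
  set T := (Homeomorph.smul (isUnit_iff_ne_zero.2 hr0).unit :
    EuclideanSpace ℝ (Fin n) ≃ₜ EuclideanSpace ℝ (Fin n)).toMeasurableEquiv with hT
  have hTapp : ∀ u : EuclideanSpace ℝ (Fin n), T u = r • u := by
    intro u
    simp [hT, Homeomorph.smul, Units.smul_def]
  have h1 : ∫⁻ u, F (r • u) = ∫⁻ x, F x ∂(Measure.map (r • ·) volume) := by
    rw [show ((r • ·) : EuclideanSpace ℝ (Fin n) → _) = ⇑T from (funext fun u => (hTapp u).symm)]
    exact (MeasureTheory.lintegral_map_equiv F T).symm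
  rw [h1, MeasureTheory.Measure.map_addHaar_smul volume hr0, lintegral_smul_measure, smul_eq_mul,
    finrank_euclideanSpace_fin, ← mul_assoc, ← ENNReal.ofReal_mul (by positivity),
    abs_of_pos (by positivity), mul_inv_cancel₀ (by positivity), ENNReal.ofReal_one, one_mul]

/-- The key pointwise inequality after the change of variables `x = (1-p) • u`. -/
private lemma pointwise_key (n : ℕ) (p q : ℝ) (hp0 : 0 < p) (hp1 : p < 1)
    (hq : q = p / (p - 1))
    (f : EuclideanSpace ℝ (Fin n) → ℝ) (hpos : ∀ z, 0 ≤ f z)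
    (hlow : 0 < ∫⁻ z, ENNReal.ofReal (f z))
    (hup : (∫⁻ z, ENNReal.ofReal (f z)) < ⊤)
    (u : EuclideanSpace ℝ (Fin n)) :
    (∫⁻ z, ENNReal.ofReal (f z)) ^ q * polarFn f u ≤
      (∫⁻ z, ENNReal.ofReal (Real.exp ((1 / p) * (inner ℝ ((1-p) • u) z : ℝ))) *
        ENNReal.ofReal (f z) ^ (1 / p)) ^ q := by
  set A := ∫⁻ z, ENNReal.ofReal (f z) with hA
  have hA0 : A ≠ 0 := hlow.ne'
  have hAt : A ≠ ⊤ := hup.ne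
  set B := polarFn f u with hB
  set c : ℝ := (1 - p) / p with hc
  have hcpos : 0 < c := div_pos (by linarith) hp0
  have hqneg : q < 0 := by
    rw [hq]; apply div_neg_of_pos_of_neg hp0; linarith
  have hq1 : (p - 1) / p * q = 1 := by
    rw [hq]; field_simp; exact div_self (by linarith)
  have hpc : (p - 1) / p = -c := by rw [hc]; ring
  -- B ≠ ⊤
  have hfy : ∃ y, 0 < f y := by
    by_contra h
    push_neg at h
    have : ∀ y, f y = 0 := fun y => le_antisymm (h y) (hpos y)
    rw [hA] at hlow
    simp [this] at hlow
  obtain ⟨y0, hy0⟩ := hfy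
  have hBt : B ≠ ⊤ := by
    have h1 : B ≤ ENNReal.ofReal (Real.exp (-(inner ℝ u y0 : ℝ))) / ENNReal.ofReal (f y0) :=
      iInf_le _ y0
    exact (h1.trans_lt (ENNReal.div_lt_top ENNReal.ofReal_ne_top
      (ENNReal.ofReal_pos.2 hy0).ne')).ne
  rcases eq_or_ne B 0 with hB0 | hB0
  · simp [hB0]
  -- main case
  have hBc0 : B ^ c ≠ 0 := by
    simp [ENNReal.rpow_eq_zero_iff, hB0, hBt, hcpos, hcpos.not_gt]
  have hBct : B ^ c ≠ ⊤ := ENNReal.rpow_ne_top_of_nonneg hcpos.le hBt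
  have hC0 : B ^ ((p - 1) / p) ≠ 0 := by
    rw [hpc, ENNReal.rpow_neg]
    exact ENNReal.inv_ne_zero.2 hBct
  have hCt : B ^ ((p - 1) / p) ≠ ⊤ := by
    rw [hpc, ENNReal.rpow_neg]
    exact ENNReal.inv_ne_top.2 hBc0
  -- Step 1
  have step1 : (∫⁻ z, ENNReal.ofReal (Real.exp ((1 / p) * (inner ℝ ((1-p) • u) z : ℝ))) *
      ENNReal.ofReal (f z) ^ (1 / p)) ≤ A * B ^ ((p - 1) / p) := by
    have : A * B ^ ((p - 1) / p) = ∫⁻ z, ENNReal.ofReal (f z) * B ^ ((p - 1) / p) := by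
      rw [lintegral_mul_const' _ _ hCt]
    rw [this]
    refine lintegral_mono fun z => ?_
    rcases (hpos z).eq_or_lt with hz | hz
    · have h0 : ENNReal.ofReal (f z) = 0 := by rw [← hz]; simp
      rw [h0, ENNReal.zero_rpow_of_pos (by positivity : (0:ℝ) < 1 / p), mul_zero, zero_mul]
    -- f z > 0
    have h1 : B * ENNReal.ofReal (f z) ≤ ENNReal.ofReal (Real.exp (-(inner ℝ u z : ℝ))) := by
      have h := iInf_le (fun y : EuclideanSpace ℝ (Fin n) =>
        ENNReal.ofReal (Real.exp (-(inner ℝ u y : ℝ))) / ENNReal.ofReal (f y)) z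
      exact (ENNReal.le_div_iff_mul_le (Or.inl (ENNReal.ofReal_pos.2 hz).ne')
        (Or.inl ENNReal.ofReal_ne_top)).1 h
    have h2 : B ^ c * ENNReal.ofReal (f z) ^ c ≤
        ENNReal.ofReal (Real.exp (-(c * (inner ℝ u z : ℝ)))) := by
      have := ENNReal.rpow_le_rpow h1 hcpos.le
      rwa [ENNReal.mul_rpow_of_nonneg _ _ hcpos.le,
        ENNReal.ofReal_rpow_of_pos (Real.exp_pos _), ← Real.exp_mul,
        show -(inner ℝ u z : ℝ) * c = -(c * (inner ℝ u z : ℝ)) by ring] at this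
    have h3 : ENNReal.ofReal (f z) ^ c ≤
        ENNReal.ofReal (Real.exp (-(c * (inner ℝ u z : ℝ)))) / B ^ c := by
      rw [ENNReal.le_div_iff_mul_le (Or.inl hBc0) (Or.inl hBct), mul_comm]
      exact h2
    have hinner : (1 / p) * (inner ℝ ((1-p) • u) z : ℝ) = c * (inner ℝ u z : ℝ) := by
      rw [real_inner_smul_left, hc]; ring
    rw [hinner, hpc, ENNReal.rpow_neg]
    have hsplit : ENNReal.ofReal (f z) ^ (1 / p) =
        ENNReal.ofReal (f z) * ENNReal.ofReal (f z) ^ c := by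
      rw [show (1 / p : ℝ) = 1 + c by rw [hc]; field_simp; ring,
        ENNReal.rpow_add _ _ (ENNReal.ofReal_pos.2 hz).ne' ENNReal.ofReal_ne_top,
        ENNReal.rpow_one]
    rw [hsplit]
    calc ENNReal.ofReal (Real.exp (c * (inner ℝ u z : ℝ))) *
          (ENNReal.ofReal (f z) * ENNReal.ofReal (f z) ^ c)
        ≤ ENNReal.ofReal (Real.exp (c * (inner ℝ u z : ℝ))) * (ENNReal.ofReal (f z) *
          (ENNReal.ofReal (Real.exp (-(c * (inner ℝ u z : ℝ)))) / B ^ c)) := by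
          gcongr
      _ = ENNReal.ofReal (f z) * (B ^ c)⁻¹ *
          (ENNReal.ofReal (Real.exp (c * (inner ℝ u z : ℝ))) *
            ENNReal.ofReal (Real.exp (-(c * (inner ℝ u z : ℝ))))) := by
          rw [div_eq_mul_inv]; ring
      _ = ENNReal.ofReal (f z) * (B ^ c)⁻¹ := by
          rw [← ENNReal.ofReal_mul (Real.exp_pos _).le, ← Real.exp_add, add_neg_cancel,
            Real.exp_zero, ENNReal.ofReal_one, mul_one]
  -- Step 2
  have step2 : (A * B ^ ((p - 1) / p)) ^ q ≤
      (∫⁻ z, ENNReal.ofReal (Real.exp ((1 / p) * (inner ℝ ((1-p) • u) z : ℝ))) *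
        ENNReal.ofReal (f z) ^ (1 / p)) ^ q := by
    have h1 := ENNReal.rpow_le_rpow step1 (by linarith : (0:ℝ) ≤ -q)
    have h2 := ENNReal.inv_le_inv.2 h1
    rwa [← ENNReal.rpow_neg, ← ENNReal.rpow_neg, neg_neg] at h2
  refine le_trans ?_ step2
  rw [ENNReal.mul_rpow_of_ne_zero hA0 hC0, ← ENNReal.rpow_mul, hq1, ENNReal.rpow_one]

/-- For `0 < p < 1`, `q = p/(p-1)` and `0 < ∫ f < ∞`:
`∫ (∫ e^{⟨x,z⟩/p} f(z)^{1/p} dz)^q dx ≥ (∫ f)^q (1-p)^n ∫ f° dx`. -/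
theorem expTransform_integral_ge (n : ℕ) (hn : 1 ≤ n) (p q : ℝ)
    (hp0 : 0 < p) (hp1 : p < 1) (hq : q = p / (p - 1))
    (f : EuclideanSpace ℝ (Fin n) → ℝ)
    (hmeas : Measurable f) (hpos : ∀ z, 0 ≤ f z)
    (hlow : 0 < ∫⁻ z, ENNReal.ofReal (f z))
    (hup : (∫⁻ z, ENNReal.ofReal (f z)) < ⊤) :
    (∫⁻ z, ENNReal.ofReal (f z)) ^ q * ENNReal.ofReal ((1 - p) ^ n) *
        (∫⁻ x, polarFn f x) ≤
      ∫⁻ x, (∫⁻ z, ENNReal.ofReal (Real.exp ((1 / p) * (inner ℝ x z : ℝ))) *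
        ENNReal.ofReal (f z) ^ (1 / p)) ^ q := by
  set A := ∫⁻ z, ENNReal.ofReal (f z) with hA
  have hA0 : A ≠ 0 := hlow.ne'
  have hAt : A ≠ ⊤ := hup.ne
  have hAqt : A ^ q ≠ ⊤ := by
    simp [ENNReal.rpow_eq_top_iff, hA0, hAt]
  set F : EuclideanSpace ℝ (Fin n) → ℝ≥0∞ := fun x =>
    (∫⁻ z, ENNReal.ofReal (Real.exp ((1 / p) * (inner ℝ x z : ℝ))) *
      ENNReal.ofReal (f z) ^ (1 / p)) ^ q with hF
  calc A ^ q * ENNReal.ofReal ((1 - p) ^ n) * (∫⁻ x, polarFn f x)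
      = ENNReal.ofReal ((1 - p) ^ n) * (A ^ q * ∫⁻ x, polarFn f x) := by ring
    _ = ENNReal.ofReal ((1 - p) ^ n) * ∫⁻ u, A ^ q * polarFn f u := by
        rw [lintegral_const_mul' _ _ hAqt]
    _ ≤ ENNReal.ofReal ((1 - p) ^ n) * ∫⁻ u, F ((1 - p) • u) := by
        refine mul_le_mul_right (lintegral_mono fun u => ?_) _
        exact pointwise_key n p q hp0 hp1 hq f hpos hlow hup u
    _ = ∫⁻ x, F x := (chgvar n (1 - p) (by linarith) F).symm

end
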